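/- For every natural number n, the number of strings of length n over the three-letter alphabet {E, L, R} in which no two consecutive letters both belong to {L, R} (i.e., the cardinality of the set of functions f : Fin n → Fin 3 such that there is no index i with both f(i) ≠ 0 and f(i+1) ≠ 0) equals the Jacobsthal number J(n+2). -/

import Mathlib

def J : ℕ → ℕ
  | 0 => 0
  | 1 => 1
  | n + 2 => J (n + 1) + 2 * J n

abbrev Adm (n : ℕ) (f : Fin n → Fin 3) : Prop :=
  ∀ i : Fin n, ∀ h : (i : ℕ) + 1 < n, ¬(f i ≠ 0 ∧ f ⟨(i : ℕ) + 1, h⟩ ≠ 0)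

lemma tail_adm {n : ℕ} {f : Fin (n+1) → Fin 3} (hf : Adm (n+1) f) :
    Adm n (Fin.tail f) := by
  intro i h
  have := hf i.succ (by simpa using Nat.succ_lt_succ h)
  have e : (⟨(i:ℕ)+1+1, Nat.succ_lt_succ h⟩ : Fin (n+1)) =
      Fin.succ ⟨(i:ℕ)+1, h⟩ := rfl
  exact fun hc => this ⟨hc.1, hc.2⟩

lemma cons_adm {n : ℕ} {a : Fin 3} {g : Fin n → Fin 3}
    (h0 : ∀ h : 0 < n, ¬(a ≠ 0 ∧ g ⟨0, h⟩ ≠ 0)) (hg : Adm n g) :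
    Adm (n+1) (Fin.cons a g) := by
  intro i h
  refine Fin.cases ?_ ?_ i h
  · intro h
    have hn : 0 < n := by omega
    have e : (⟨(0:Fin (n+1)).val + 1, h⟩ : Fin (n+1)) = Fin.succ ⟨0, hn⟩ := by
      ext; simp
    rw [e]; simp only [Fin.cons_succ, Fin.cons_zero]; simpa using h0 hn
  · intro j h
    have hj : (j:ℕ)+1 < n := by simpa using h
    have e : (⟨(j.succ : Fin (n+1)).val + 1, h⟩ : Fin (n+1)) =
        Fin.succ ⟨(j:ℕ)+1, hj⟩ := by ext; simp
    rw [e]; simp only [Fin.cons_succ]; simpa using hg j hj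

def extend0 {n : ℕ} (g : {g : Fin (n+1) → Fin 3 // Adm (n+1) g}) :
    {f : Fin (n+2) → Fin 3 // Adm (n+2) f} :=
  ⟨Fin.cons 0 g.1, cons_adm (fun _ hc => hc.1 rfl) g.2⟩

def extend1 {n : ℕ} (a : Fin 2) (g : {g : Fin n → Fin 3 // Adm n g}) :
    {f : Fin (n+2) → Fin 3 // Adm (n+2) f} :=
  ⟨Fin.cons a.succ (Fin.cons 0 g.1), by
    refine cons_adm (fun h hc => ?_) (cons_adm (fun _ hc => hc.1 rfl) g.2)
    have e : (⟨0, h⟩ : Fin (n+1)) = 0 := by ext; simp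
    rw [e, Fin.cons_zero] at hc
    exact hc.2 rfl⟩

def admEquiv (n : ℕ) :
    {f : Fin (n+2) → Fin 3 // Adm (n+2) f} ≃
    ({g : Fin (n+1) → Fin 3 // Adm (n+1) g} ⊕ (Fin 2 × {g : Fin n → Fin 3 // Adm n g})) where
  toFun f :=
    if h : f.1 0 = 0 then
      Sum.inl ⟨Fin.tail f.1, tail_adm f.2⟩
    else
      Sum.inr ((f.1 0).pred h, ⟨Fin.tail (Fin.tail f.1), tail_adm (tail_adm f.2)⟩)
  invFun x :=
    match x with
    | Sum.inl g => extend0 g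
    | Sum.inr (a, g) => extend1 a g
  left_inv f := by
    by_cases h : f.1 0 = 0
    · simp only [h, dif_pos]
      apply Subtype.ext
      show Fin.cons 0 (Fin.tail f.1) = f.1
      rw [← h, Fin.cons_self_tail]
    · simp only [h, dif_neg, not_false_iff]
      apply Subtype.ext
      show Fin.cons ((f.1 0).pred h).succ (Fin.cons 0 (Fin.tail (Fin.tail f.1))) = f.1
      have hlt : ((0 : Fin (n+2)) : ℕ) + 1 < n + 2 := by simp
      have h1 : f.1 1 = 0 := by
        by_contra hc
        have e : (⟨((0 : Fin (n+2)) : ℕ) + 1, hlt⟩ : Fin (n+2)) = 1 := by ext; simp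
        exact f.2 0 hlt ⟨h, by rw [e]; exact hc⟩
      have e1 : Fin.tail f.1 0 = 0 := h1
      rw [Fin.succ_pred, ← e1, Fin.cons_self_tail, Fin.cons_self_tail]
  right_inv x := by
    match x with
    | Sum.inl g =>
      have h0 : (Fin.cons 0 g.1 : Fin (n+2) → Fin 3) 0 = 0 := by simp
      dsimp only [extend0]
      rw [dif_pos h0]
      refine congrArg Sum.inl (Subtype.ext ?_)
      simp [Fin.tail_cons]
    | Sum.inr (a, g) =>
      have h0 : (Fin.cons a.succ (Fin.cons 0 g.1) : Fin (n+2) → Fin 3) 0 = a.succ := by simp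
      have hne : (Fin.cons a.succ (Fin.cons 0 g.1) : Fin (n+2) → Fin 3) 0 ≠ 0 := by
        rw [h0]; exact Fin.succ_ne_zero a
      dsimp only [extend1]
      rw [dif_neg hne]
      refine congrArg Sum.inr (Prod.ext ?_ ?_)
      · simp [h0]
      · refine Subtype.ext ?_
        simp [Fin.tail_cons]

lemma card_step (n : ℕ) :
    Fintype.card {f : Fin (n+2) → Fin 3 // Adm (n+2) f} =
    Fintype.card {g : Fin (n+1) → Fin 3 // Adm (n+1) g} +
      2 * Fintype.card {g : Fin n → Fin 3 // Adm n g} := by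
  rw [Fintype.card_congr (admEquiv n), Fintype.card_sum, Fintype.card_prod, Fintype.card_fin]

theorem key : ∀ n : ℕ, Fintype.card {f : Fin n → Fin 3 // Adm n f} = J (n+2)
  | 0 => by decide
  | 1 => by decide
  | n + 2 => by
    rw [card_step, key (n+1), key n, show J (n+2+2) = J (n+3) + 2 * J (n+2) from rfl]

theorem count_admissible_eq_jacobsthal (n : ℕ) :
    Fintype.card {f : Fin n → Fin 3 //
      ∀ i : Fin n, ∀ h : (i : ℕ) + 1 < n,
        ¬(f i ≠ 0 ∧ f ⟨(i : ℕ) + 1, h⟩ ≠ 0)} = J (n + 2) := by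
  exact key n
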